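/- Visible steps of the monitored system determine the residual monitor: for every closed guarded φ ∈ SHMLnf, systems p, p', transducer e' and action a ∈ Act, if ⟦φ⟧e[p] -a-> e'[p'] then p -a-> p' and e' = ⟦after(φ, a)⟧e. -/
import Mathlib


set_option autoImplicit false

/-- A labelled transition system over observable actions `Act`;
`none` plays the role of the silent action τ. -/
structure LTS (Act : Type) where
  S : Type
  Tr : S → Option Act → S → Prop

namespace Enf

open scoped Classical

variable {Act : Type}

/-- Zero or more silent steps. -/
def TauStar (L : LTS Act) : L.S → L.S → Prop :=
  Relation.ReflTransGen (fun p q => L.Tr p none q)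

/-- The weak transition `p =a=> q`. -/
def WStep (L : LTS Act) (p : L.S) (a : Act) (q : L.S) : Prop :=
  ∃ p₁ p₂, TauStar L p p₁ ∧ L.Tr p₁ (some a) p₂ ∧ TauStar L p₂ q

/-- Weak trace `p =t=> q`. -/
inductive WTrace (L : LTS Act) : L.S → List Act → L.S → Prop
  | nil {p q : L.S} : TauStar L p q → WTrace L p [] q
  | cons {p r q : L.S} {a : Act} {t : List Act} :
      WStep L p a r → WTrace L r t q → WTrace L p (a :: t) q

/-- SHML formulas: truth, falsehood, fixpoint variables, finite conjunctions,
modalities `[η]φ` (a guard set of actions together with an action-indexed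
continuation, representing the symbolic action and the matching substitutions),
and greatest fixpoints. -/
inductive Frm (Act : Type) : Type where
  | tt : Frm Act
  | ff : Frm Act
  | var : ℕ → Frm Act
  | conj : (n : ℕ) → (Fin n → Frm Act) → Frm Act
  | box : Set Act → (Act → Frm Act) → Frm Act
  | max : ℕ → Frm Act → Frm Act

namespace Frm

/-- Free fixpoint variables. -/
def fv : Frm Act → Set ℕ
  | .tt => ∅
  | .ff => ∅
  | .var X => {X}
  | .conj _ f => ⋃ i, fv (f i)
  | .box G k => ⋃ a ∈ G, fv (k a)
  | .max X φ => fv φ \ {X}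

def Closed (φ : Frm Act) : Prop := fv φ = ∅

/-- Substitution `φ[ψ/X]` (of a closed formula `ψ`). -/
def subst : Frm Act → ℕ → Frm Act → Frm Act
  | .tt, _, _ => .tt
  | .ff, _, _ => .ff
  | .var Y, X, ψ => if Y = X then ψ else .var Y
  | .conj n f, X, ψ => .conj n (fun i => subst (f i) X ψ)
  | .box G k, X, ψ => .box G (fun a => subst (k a) X ψ)
  | .max Y φ, X, ψ => if Y = X then .max Y φ else .max Y (subst φ X ψ)

/-- The normal-form fragment SHMLnf: conjunctions are conjunctions of
modalities with pairwise-disjoint guards, and each greatest fixpoint binds a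
variable occurring free in its body. -/
inductive IsNF : Frm Act → Prop
  | tt : IsNF .tt
  | ff : IsNF .ff
  | var (X : ℕ) : IsNF (.var X)
  | conj (n : ℕ) (G : Fin n → Set Act) (k : Fin n → Act → Frm Act)
      (hdisj : ∀ i j : Fin n, i ≠ j → ∀ a : Act, a ∈ G i → a ∉ G j)
      (hk : ∀ i : Fin n, ∀ a ∈ G i, IsNF (k i a)) :
      IsNF (.conj n fun i => .box (G i) (k i))
  | max (X : ℕ) (φ : Frm Act) (hfree : X ∈ fv φ) (hφ : IsNF φ) : IsNF (.max X φ)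

/-- `gvar X φ`: the variable `X` does not occur unguarded (i.e. outside every
modality) in `φ`. -/
def gvar (X : ℕ) : Frm Act → Prop
  | .tt => True
  | .ff => True
  | .var Y => Y ≠ X
  | .conj _ f => ∀ i, gvar X (f i)
  | .box _ _ => True
  | .max Y φ => Y = X ∨ gvar X φ

/-- A formula is guarded if every occurrence of a fixpoint variable lies
beneath a modality. -/
def Guarded : Frm Act → Prop
  | .tt => True
  | .ff => True
  | .var _ => True
  | .conj _ f => ∀ i, Guarded (f i)
  | .box G k => ∀ a ∈ G, Guarded (k a)
  | .max X φ => gvar X φ ∧ Guarded φ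

/-- Number of top-level greatest-fixpoint binders. -/
def topMax : Frm Act → ℕ
  | .max _ φ => topMax φ + 1
  | _ => 0

end Frm

/-- Denotational semantics of (possibly open) formulas, relative to an
environment mapping fixpoint variables to sets of states; `max` is interpreted
as the greatest fixpoint of the induced monotone map. -/
def sem (L : LTS Act) : Frm Act → (ℕ → Set L.S) → Set L.S
  | .tt, _ => Set.univ
  | .ff, _ => ∅
  | .var X, ρ => ρ X
  | .conj _ f, ρ => ⋂ i, sem L (f i) ρ
  | .box G k, ρ => {p | ∀ a ∈ G, ∀ q, WStep L p a q → q ∈ sem L (k a) ρ}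
  | .max X φ, ρ => ⋃₀ {S | S ⊆ sem L φ (Function.update ρ X S)}

/-- Semantics of closed formulas. -/
def Sem (L : LTS Act) (φ : Frm Act) : Set L.S := sem L φ fun _ => ∅

/-- Satisfiability. -/
def SatIn (L : LTS Act) (φ : Frm Act) : Prop := (Sem L φ).Nonempty

/-- The violation relation `p ⊨v^t φ`, defined as the least relation closed
under the given rules. -/
inductive Viol (L : LTS Act) : L.S → List Act → Frm Act → Prop
  | ff (p : L.S) : Viol L p [] .ff
  | conj {p : L.S} {t : List Act} {n : ℕ} {f : Fin n → Frm Act} (j : Fin n) :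
      Viol L p t (f j) → Viol L p t (.conj n f)
  | box {p p' : L.S} {t : List Act} {a : Act} {G : Set Act} {k : Act → Frm Act} :
      a ∈ G → WStep L p a p' → Viol L p' t (k a) → Viol L p (a :: t) (.box G k)
  | max {p : L.S} {t : List Act} {X : ℕ} {φ : Frm Act} :
      Viol L p t (Frm.subst φ X (.max X φ)) → Viol L p t (.max X φ)

/-- Transducers (enforcement monitors): identity, symbolic transformation
prefixes (a guard set of extended input actions, with `none` standing for the
insertion pattern •, an output per matched input, with `none` standing for τ,
and a continuation per matched input), finite selections, recursion, and
recursion variables. -/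
inductive Trn (Act : Type) : Type where
  | id : Trn Act
  | prf : Set (Option Act) → (Option Act → Option Act) → (Option Act → Trn Act) → Trn Act
  | sel : (n : ℕ) → (Fin n → Trn Act) → Trn Act
  | fix : ℕ → Trn Act → Trn Act
  | var : ℕ → Trn Act

namespace Trn

def tsubst : Trn Act → ℕ → Trn Act → Trn Act
  | .id, _, _ => .id
  | .prf G out k, x, s => .prf G out fun γ => tsubst (k γ) x s
  | .sel n f, x, s => .sel n fun i => tsubst (f i) x s
  | .fix y e, x, s => if y = x then .fix y e else .fix y (tsubst e x s)
  | .var y, x, s => if y = x then s else .var y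

end Trn

/-- Transducer transitions: labels are pairs (input, output) where input
`none` is the insertion pattern • and output `none` is τ. -/
inductive TStep : Trn Act → Option Act × Option Act → Trn Act → Prop
  | id (a : Act) : TStep .id (some a, some a) .id
  | prf {G : Set (Option Act)} {out : Option Act → Option Act}
      {k : Option Act → Trn Act} {γ : Option Act} (h : γ ∈ G) :
      TStep (.prf G out k) (γ, out γ) (k γ)
  | sel {n : ℕ} {f : Fin n → Trn Act} {l : Option Act × Option Act}
      {e' : Trn Act} (i : Fin n) (h : TStep (f i) l e') :
      TStep (.sel n f) l e'
  | fix {x : ℕ} {e : Trn Act} {l : Option Act × Option Act} {e' : Trn Act}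
      (h : TStep (Trn.tsubst e x (.fix x e)) l e') :
      TStep (.fix x e) l e'

/-- Instrumentation of a transducer on a system. -/
inductive IStep (L : LTS Act) : Trn Act × L.S → Option Act → Trn Act × L.S → Prop
  | trn {e e' : Trn Act} {p p' : L.S} {a : Act} {μ : Option Act} :
      L.Tr p (some a) p' → TStep e (some a, μ) e' → IStep L (e, p) μ (e', p')
  | asy {e : Trn Act} {p p' : L.S} :
      L.Tr p none p' → IStep L (e, p) none (e, p')
  | ins {e e' : Trn Act} {p : L.S} {μ : Option Act} :
      TStep e (none, μ) e' → IStep L (e, p) μ (e', p)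
  | ter {e : Trn Act} {p p' : L.S} {a : Act} :
      L.Tr p (some a) p' →
      (∀ μ e', ¬ TStep e (some a, μ) e') →
      (∀ μ e', ¬ TStep e (none, μ) e') →
      IStep L (e, p) (some a) (Trn.id, p')

/-- The LTS of monitored systems `e[p]`. -/
def instLTS (L : LTS Act) : LTS Act := ⟨Trn Act × L.S, IStep L⟩

/-- Strong bisimulations between (the state spaces of) two LTSs. -/
def IsBisim (L₁ L₂ : LTS Act) (R : L₁.S → L₂.S → Prop) : Prop :=
  ∀ s r, R s r →
    (∀ μ s', L₁.Tr s μ s' → ∃ r', L₂.Tr r μ r' ∧ R s' r') ∧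
    (∀ μ r', L₂.Tr r μ r' → ∃ s', L₁.Tr s μ s' ∧ R s' r')

/-- Strong bisimilarity. -/
def Bisim (L₁ L₂ : LTS Act) (s : L₁.S) (r : L₂.S) : Prop :=
  ∃ R, IsBisim L₁ L₂ R ∧ R s r

/-- The synthesis function `⟦-⟧e` from SHMLnf formulas to transducers:
formula variable `X` becomes monitor variable `X+1`; `tt` and `ff` become the
identity monitor; `max X.φ` becomes the corresponding recursive monitor; and a
normalised conjunction of modalities becomes a recursive selection (on the
fresh variable `0`) of symbolic prefixes that suppress (output τ, continue as
the recursion variable) actions whose continuation formula is `ff` and pass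
through all other matched actions, continuing with the synthesis of the
respective continuation formula. -/
noncomputable def synth : Frm Act → Trn Act
  | .tt => .id
  | .ff => .id
  | .var X => .var (X + 1)
  | .max X φ => .fix (X + 1) (synth φ)
  | .box G k =>
      .prf {γ | ∃ a ∈ G, γ = some a}
        (fun γ =>
          match γ with
          | some a => if k a = Frm.ff then none else some a
          | none => none)
        (fun γ =>
          match γ with
          | some a => if k a = Frm.ff then Trn.var 0 else synth (k a)
          | none => .id)
  | .conj n f => .fix 0 (.sel n fun i => synth (f i))

/-- Fuelled residual function (the fuel is consumed by fixpoint unfoldings;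
on guarded closed SHMLnf formulas `topMax φ + 1` units of fuel suffice). -/
noncomputable def afterFuel : ℕ → Frm Act → Act → Frm Act
  | 0, _, _ => .tt
  | n + 1, φ, a =>
    match φ with
    | .max X ψ => afterFuel n (Frm.subst ψ X (.max X ψ)) a
    | .conj m f =>
        if h : ∃ i : Fin m, ∃ G : Set Act, ∃ k : Act → Frm Act,
            f i = Frm.box G k ∧ a ∈ G
        then h.choose_spec.choose_spec.choose a
        else .tt
    | ψ => ψ

/-- The residual `after(φ, a)` of a guarded closed SHMLnf formula. -/
noncomputable def after (φ : Frm Act) (a : Act) : Frm Act :=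
  afterFuel (Frm.topMax φ + 1) φ a

/-- Satisfaction relations (the coinductive rules of `⊨s`). -/
def IsSatRel (L : LTS Act) (R : L.S → Frm Act → Prop) : Prop :=
  (∀ p, ¬ R p .ff) ∧
  (∀ p (n : ℕ) (f : Fin n → Frm Act), R p (.conj n f) → ∀ i, R p (f i)) ∧
  (∀ p (G : Set Act) (k : Act → Frm Act), R p (.box G k) →
      ∀ a ∈ G, ∀ q, WStep L p a q → R q (k a)) ∧
  (∀ p (X : ℕ) (φ : Frm Act), R p (.max X φ) → R p (Frm.subst φ X (.max X φ)))

/-- The largest satisfaction relation `⊨s`. -/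
def SatCo (L : LTS Act) (p : L.S) (φ : Frm Act) : Prop :=
  ∃ R, IsSatRel L R ∧ R p φ



section Aux

open Frm

lemma fv_subst_closed (χ : Frm Act) (hχ : χ.Closed) (X : ℕ) :
    ∀ φ : Frm Act, fv (subst φ X χ) = fv φ \ {X} := by
  intro φ
  induction φ with
  | tt => simp [subst, fv]
  | ff => simp [subst, fv]
  | var Y =>
      by_cases h : Y = X
      · have hfv : fv χ = ∅ := hχ
        simp [subst, fv, h, hfv]
      · simp only [subst, if_neg h]
        ext z
        simp only [fv, Set.mem_singleton_iff, Set.mem_diff]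
        constructor
        · rintro rfl; exact ⟨rfl, fun hz => h hz⟩
        · rintro ⟨rfl, -⟩; rfl
  | conj n f ih =>
      ext z; simp [subst, fv, ih]; try tauto
  | box G k ih =>
      ext z; simp [subst, fv, ih]; try tauto
  | max Y φ ih =>
      by_cases h : Y = X
      · subst h; ext z; simp [subst, fv]; try tauto
      · ext z; simp [subst, fv, h, ih]; try tauto

lemma subst_eq_ff_iff (χ : Frm Act) (hχ : χ ≠ .ff) (X : ℕ) (ψ : Frm Act) :
    subst ψ X χ = .ff ↔ ψ = .ff := by
  cases ψ with
  | tt => simp [subst]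
  | ff => simp [subst]
  | var Y =>
      by_cases h : Y = X <;> simp [subst, h, hχ]
  | conj n f => simp [subst]
  | box G k => simp [subst]
  | max Y φ =>
      by_cases h : Y = X <;> simp [subst, h]

lemma gvar_of_not_free (Y : ℕ) : ∀ χ : Frm Act, Y ∉ fv χ → gvar Y χ := by
  intro χ
  induction χ with
  | tt => intro _; trivial
  | ff => intro _; trivial
  | var Z => intro h; simp [fv] at h; simp [gvar]; omega
  | conj n f ih => intro h; simp [fv] at h; intro i; exact ih i (h i)
  | box G k ih => intro _; trivial
  | max Z χ ih =>
      intro h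
      by_cases hZ : Z = Y
      · exact Or.inl hZ
      · refine Or.inr (ih ?_)
        simp [fv] at h
        intro hmem
        exact hZ (h hmem).symm

lemma gvar_subst (Y X : ℕ) (χ : Frm Act) (hχ : Y ∉ fv χ) :
    ∀ φ : Frm Act, gvar Y φ → gvar Y (subst φ X χ) := by
  intro φ
  induction φ with
  | tt => intro _; trivial
  | ff => intro _; trivial
  | var Z =>
      intro h
      by_cases hZ : Z = X
      · simp [subst, hZ]; exact gvar_of_not_free Y χ hχ
      · simpa [subst, hZ] using h
  | conj n f ih => intro h i; exact ih i (h i)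
  | box G k ih => intro _; trivial
  | max Z φ ih =>
      intro h
      by_cases hZ : Z = X
      · simpa [subst, hZ] using h
      · simp only [subst, if_neg hZ]
        rcases h with h | h
        · exact Or.inl h
        · exact Or.inr (ih h)

lemma guarded_subst (χ : Frm Act) (hχc : χ.Closed) (hχg : χ.Guarded) (X : ℕ) :
    ∀ φ : Frm Act, Guarded φ → Guarded (subst φ X χ) := by
  intro φ
  induction φ with
  | tt => intro _; trivial
  | ff => intro _; trivial
  | var Z =>
      intro _
      by_cases hZ : Z = X <;> simp [subst, hZ, hχg] <;> trivial
  | conj n f ih => intro h i; exact ih i (h i)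
  | box G k ih => intro h a ha; exact ih a (h a ha)
  | max Z φ ih =>
      intro h
      by_cases hZ : Z = X
      · simpa [subst, hZ] using h
      · simp only [subst, if_neg hZ]
        refine ⟨gvar_subst Z X χ ?_ φ h.1, ih h.2⟩
        simp [Frm.Closed] at hχc
        simp [hχc]

lemma nf_subst (χ : Frm Act) (hχc : χ.Closed) (hχnf : IsNF χ) (X : ℕ) :
    ∀ φ : Frm Act, IsNF φ → IsNF (subst φ X χ) := by
  intro φ hφ
  induction hφ with
  | tt => exact IsNF.tt
  | ff => exact IsNF.ff
  | var Y =>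
      by_cases h : Y = X
      · simpa [subst, h] using hχnf
      · simp only [subst, if_neg h]; exact IsNF.var Y
  | conj n G k hdisj hk ih =>
      have : (fun i => subst (Frm.box (G i) (k i)) X χ)
          = fun i => Frm.box (G i) (fun a => subst (k i a) X χ) := by
        funext i; simp [subst]
      simp only [subst, this]
      exact IsNF.conj n G _ hdisj (fun i a ha => ih i a ha)
  | max Y φ hfree hφ' ih =>
      by_cases h : Y = X
      · simp only [subst, if_pos h]
        exact IsNF.max Y φ hfree hφ'
      · simp only [subst, if_neg h]
        refine IsNF.max Y _ ?_ ih
        rw [fv_subst_closed χ hχc X φ]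
        exact ⟨hfree, h⟩

lemma topMax_subst (χ : Frm Act) (X : ℕ) :
    ∀ φ : Frm Act, gvar X φ → topMax (subst φ X χ) = topMax φ := by
  intro φ
  induction φ with
  | tt => intro _; rfl
  | ff => intro _; rfl
  | var Y => intro h; simp [gvar] at h; simp [subst, h, topMax]
  | conj n f ih => intro _; simp [subst, topMax]
  | box G k ih => intro _; simp [subst, topMax]
  | max Y φ ih =>
      intro h
      by_cases hY : Y = X
      · simp [subst, hY]
      · rcases h with h | h
        · exact absurd h hY
        · simp [subst, hY, topMax, ih h]

lemma tsubst_synth_zero (s : Trn Act) :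
    ∀ φ : Frm Act, IsNF φ → Trn.tsubst (synth φ) 0 s = synth φ := by
  intro φ hφ
  induction hφ with
  | tt => rfl
  | ff => rfl
  | var Y => simp [synth, Trn.tsubst]
  | conj n G k hdisj hk ih => simp [synth, Trn.tsubst]
  | max Y φ hfree hφ' ih => simp [synth, Trn.tsubst, ih]

lemma synth_subst (χ : Frm Act) (hχ : χ ≠ .ff) (X : ℕ) :
    ∀ φ : Frm Act, synth (subst φ X χ) = Trn.tsubst (synth φ) (X + 1) (synth χ) := by
  intro φ
  induction φ with
  | tt => simp [subst, synth, Trn.tsubst]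
  | ff => simp [subst, synth, Trn.tsubst]
  | var Y =>
      by_cases h : Y = X <;> simp [subst, synth, Trn.tsubst, h]
  | conj n f ih =>
      simp [subst, synth, Trn.tsubst, ih]
  | box G k ih =>
      simp only [subst, synth, Trn.tsubst]
      congr 1
      · funext γ
        cases γ with
        | none => rfl
        | some a =>
            by_cases h : k a = Frm.ff
            · have hsub : subst (k a) X χ = Frm.ff := (subst_eq_ff_iff χ hχ X (k a)).2 h
              simp [hsub, h, subst]
            · have hsub : ¬ subst (k a) X χ = Frm.ff :=
                fun hc => h ((subst_eq_ff_iff χ hχ X (k a)).1 hc)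
              simp [hsub, h, subst]
      · funext γ
        cases γ with
        | none => rfl
        | some a =>
            by_cases h : k a = Frm.ff
            · have hsub : subst (k a) X χ = Frm.ff := (subst_eq_ff_iff χ hχ X (k a)).2 h
              simp [hsub, h, subst, Trn.tsubst]
            · have hsub : ¬ subst (k a) X χ = Frm.ff :=
                fun hc => h ((subst_eq_ff_iff χ hχ X (k a)).1 hc)
              simp [hsub, h, ih]
  | max Y φ ih =>
      by_cases h : Y = X
      · simp [subst, synth, Trn.tsubst, h]
      · have : Y + 1 ≠ X + 1 := by omega
        simp [subst, synth, Trn.tsubst, h, this, ih]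

lemma after_max (X : ℕ) (ψ : Frm Act) (hg : gvar X ψ) (a : Act) :
    after (.max X ψ) a = after (Frm.subst ψ X (.max X ψ)) a := by
  unfold after
  rw [topMax_subst (.max X ψ) X ψ hg]
  rfl

lemma after_conj_mem (n : ℕ) (G : Fin n → Set Act) (k : Fin n → Act → Frm Act)
    (hdisj : ∀ i j : Fin n, i ≠ j → ∀ a : Act, a ∈ G i → a ∉ G j)
    (j : Fin n) (a : Act) (ha : a ∈ G j) :
    after (.conj n fun i => .box (G i) (k i)) a = k j a := by
  have h : ∃ i : Fin n, ∃ G' : Set Act, ∃ k' : Act → Frm Act,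
      (fun i => Frm.box (G i) (k i)) i = Frm.box G' k' ∧ a ∈ G' :=
    ⟨j, G j, k j, rfl, ha⟩
  have : after (.conj n fun i => .box (G i) (k i)) a
      = h.choose_spec.choose_spec.choose a := by
    simp only [after, Frm.topMax, afterFuel, dif_pos h]
  rw [this]
  obtain ⟨heq, hmem⟩ := h.choose_spec.choose_spec.choose_spec
  obtain ⟨hG, hk⟩ := Frm.box.inj heq
  have hij : h.choose = j := by
    by_contra hne
    exact hdisj h.choose j hne a (hG ▸ hmem) ha
  rw [← hk, hij]

lemma after_conj_notmem (n : ℕ) (G : Fin n → Set Act) (k : Fin n → Act → Frm Act)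
    (a : Act) (ha : ∀ i, a ∉ G i) :
    after (.conj n fun i => .box (G i) (k i)) a = .tt := by
  have h : ¬ ∃ i : Fin n, ∃ G' : Set Act, ∃ k' : Act → Frm Act,
      (fun i => Frm.box (G i) (k i)) i = Frm.box G' k' ∧ a ∈ G' := by
    rintro ⟨i, G', k', heq, hmem⟩
    obtain ⟨hG, -⟩ := Frm.box.inj heq
    exact ha i (hG ▸ hmem)
  simp only [after, Frm.topMax, afterFuel, dif_neg h]

lemma synth_key : ∀ (N : ℕ) (φ : Frm Act), φ.topMax ≤ N → φ.Closed → φ.IsNF →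
    φ.Guarded → ∀ a : Act,
    (∀ μ e', ¬ TStep (synth φ) (none, μ) e') ∧
    (∀ γ e', TStep (synth φ) (γ, some a) e' → γ = some a ∧ e' = synth (after φ a)) ∧
    ((∀ μ e', ¬ TStep (synth φ) (some a, μ) e') → synth (after φ a) = Trn.id) := by
  intro N
  induction N using Nat.strong_induction_on with
  | _ N IH =>
  intro φ hN hc hnf hg a
  cases hnf with
  | tt =>
      refine ⟨?_, ?_, ?_⟩
      · intro μ e' h; cases h
      · intro γ e' h
        cases h
        refine ⟨rfl, ?_⟩
        simp [after, afterFuel, Frm.topMax, synth]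
      · intro _
        simp [after, afterFuel, Frm.topMax, synth]
  | ff =>
      refine ⟨?_, ?_, ?_⟩
      · intro μ e' h; cases h
      · intro γ e' h
        cases h
        refine ⟨rfl, ?_⟩
        simp [after, afterFuel, Frm.topMax, synth]
      · intro _
        simp [after, afterFuel, Frm.topMax, synth]
  | var X =>
      exfalso
      have hc' : Frm.fv (Frm.var (Act := Act) X) = ∅ := hc
      simp [Frm.fv, Set.eq_empty_iff_forall_notMem] at hc'
  | conj n G k hdisj hk =>
      have inv : ∀ (l : Option Act × Option Act) (e' : Trn Act),
          TStep (synth (.conj n fun i => .box (G i) (k i))) l e' →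
          ∃ (i : Fin n) (b : Act), b ∈ G i ∧ l.1 = some b ∧
            l.2 = (if k i b = Frm.ff then none else some b) ∧
            e' = (if k i b = Frm.ff
              then synth (.conj n fun i => .box (G i) (k i))
              else synth (k i b)) := by
        intro l e' h
        cases h with
        | fix h' =>
          simp only [Trn.tsubst] at h'
          cases h' with
          | sel i h'' =>
            simp only [synth, Trn.tsubst] at h''
            cases h'' with
            | prf hγ =>
              obtain ⟨b, hb, rfl⟩ := hγ
              refine ⟨i, b, hb, rfl, rfl, ?_⟩
              by_cases hff : k i b = Frm.ff <;>
                simp [hff, tsubst_synth_zero _ _ (hk i b hb), Trn.tsubst, synth]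
      refine ⟨?_, ?_, ?_⟩
      · intro μ e' h
        obtain ⟨i, b, hb, h1, -, -⟩ := inv _ _ h
        simp at h1
      · intro γ e' h
        obtain ⟨i, b, hb, h1, h2, h3⟩ := inv _ _ h
        simp only at h1 h2
        by_cases hff : k i b = Frm.ff
        · rw [if_pos hff] at h2; cases h2
        · rw [if_neg hff] at h2 h3
          injection h2 with h2
          subst h2
          refine ⟨h1, ?_⟩
          rw [after_conj_mem n G k hdisj i a hb]
          exact h3
      · intro hno
        by_cases hmem : ∃ i, a ∈ G i
        · exfalso
          obtain ⟨i, hai⟩ := hmem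
          have hs1 : TStep
              (Trn.tsubst (synth (.box (G i) (k i))) 0
                (synth (.conj n fun i => .box (G i) (k i))))
              (some a, if k i a = Frm.ff then none else some a)
              (Trn.tsubst (if k i a = Frm.ff then Trn.var 0 else synth (k i a)) 0
                (synth (.conj n fun i => .box (G i) (k i)))) := by
            simp only [synth, Trn.tsubst]
            exact TStep.prf (γ := some a) ⟨a, hai, rfl⟩
          have hs2 : TStep
              (Trn.sel n fun j => Trn.tsubst (synth (.box (G j) (k j))) 0
                (synth (.conj n fun i => .box (G i) (k i))))
              (some a, if k i a = Frm.ff then none else some a)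
              (Trn.tsubst (if k i a = Frm.ff then Trn.var 0 else synth (k i a)) 0
                (synth (.conj n fun i => .box (G i) (k i)))) := TStep.sel i hs1
          exact hno _ _ (TStep.fix hs2)
        · push_neg at hmem
          rw [after_conj_notmem n G k a hmem]
          rfl
  | max X ψ hfree hψ =>
      obtain ⟨hgv, hgψ⟩ := id hg
      have hmaxnf : Frm.IsNF (.max X ψ) := .max X ψ hfree hψ
      have hmaxc : (Frm.max X ψ).Closed := hc
      have hσc : (Frm.subst ψ X (.max X ψ)).Closed := by
        show Frm.fv _ = ∅
        rw [fv_subst_closed _ hmaxc X ψ]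
        exact hc
      have hσnf : (Frm.subst ψ X (.max X ψ)).IsNF := nf_subst _ hmaxc hmaxnf X ψ hψ
      have hσg : (Frm.subst ψ X (.max X ψ)).Guarded :=
        guarded_subst _ hmaxc hg X ψ hgψ
      have htm : (Frm.subst ψ X (.max X ψ)).topMax = ψ.topMax :=
        topMax_subst _ X ψ hgv
      have hlt : ψ.topMax < N := by
        have h1 : Frm.topMax (.max X ψ) = ψ.topMax + 1 := rfl
        omega
      obtain ⟨ih1, ih2, ih3⟩ := IH ψ.topMax hlt (Frm.subst ψ X (.max X ψ))
        (le_of_eq htm) hσc hσnf hσg a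
      have hne : (Frm.max X ψ) ≠ Frm.ff := by simp
      have hsyn : synth (Frm.subst ψ X (.max X ψ))
          = Trn.tsubst (synth ψ) (X + 1) (synth (.max X ψ)) := synth_subst _ hne X ψ
      have hfwd : ∀ (l : Option Act × Option Act) (e' : Trn Act),
          TStep (synth (.max X ψ)) l e' → TStep (synth (Frm.subst ψ X (.max X ψ))) l e' := by
        intro l e' h
        cases h with
        | fix h' => rw [hsyn]; exact h'
      have hbwd : ∀ (l : Option Act × Option Act) (e' : Trn Act),
          TStep (synth (Frm.subst ψ X (.max X ψ))) l e' → TStep (synth (.max X ψ)) l e' := by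
        intro l e' h
        rw [hsyn] at h
        exact TStep.fix h
      refine ⟨?_, ?_, ?_⟩
      · intro μ e' h; exact ih1 μ e' (hfwd _ _ h)
      · intro γ e' h
        obtain ⟨h1, h2⟩ := ih2 γ e' (hfwd _ _ h)
        rw [after_max X ψ hgv a]
        exact ⟨h1, h2⟩
      · intro hno
        rw [after_max X ψ hgv a]
        exact ih3 (fun μ e' h => hno μ e' (hbwd _ _ h))

end Aux

/-- visible steps of the monitored system determine the residual
monitor: for closed guarded SHMLnf φ, if ⟦φ⟧e[p] -a-> e'[p'] then p -a-> p' and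
e' = ⟦after(φ, a)⟧e. -/
theorem visible_step_residual (Act : Type) (L : LTS Act) (φ : Frm Act)
    (hclosed : φ.Closed) (hnf : φ.IsNF) (hguard : φ.Guarded)
    (p p' : L.S) (e' : Trn Act) (a : Act)
    (hstep : IStep L (synth φ, p) (some a) (e', p')) :
    L.Tr p (some a) p' ∧ e' = synth (after φ a) := by
  obtain ⟨hni, hvis, hter⟩ := synth_key (Frm.topMax φ) φ le_rfl hclosed hnf hguard a
  cases hstep with
  | trn htr hts =>
      obtain ⟨hγ, he⟩ := hvis _ _ hts
      injection hγ with hγ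
      subst hγ
      exact ⟨htr, he⟩
  | ins hts => exact absurd hts (hni _ _)
  | ter htr hno hnoins => exact ⟨htr, (hter hno).symm⟩

end Enf
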